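/- arXiv:1907.09099 — 3 statements merged into one kernel-verified Lean document; each statement's English description precedes it below -/
import Mathlib

section
/- Let K be a consistent and deductively closed set of propositional formulas, let {Φ_C, Φ_A, Φ_R} be a credibility partition of the set Φ of all formulas, and let B°_K : Φ → 2^Φ be a belief revision function based on K. Then the following are equivalent: (A) B°_K is a filtered belief revision function; (B) there exists a basic AGM belief revision function B*_K : Φ → 2^Φ such that for all φ ∈ Φ: B°_K(φ) = K if φ ∈ Φ_R, B°_K(φ) = B*_K(φ) if φ ∈ Φ_C, and B°_K(φ) = K ∩ B*_K(φ) if φ ∈ Φ_A. -/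
/-! Propositional language built from a set of atomic formulas via negation and disjunction. -/

inductive PropForm (α : Type) : Type
  | atom : α → PropForm α
  | neg : PropForm α → PropForm α
  | or : PropForm α → PropForm α → PropForm α

namespace PropForm

/-- Truth value of a formula under a boolean valuation of the atoms. -/
def eval (v : α → Bool) : PropForm α → Bool
  | atom a => v a
  | neg φ => !(eval v φ)
  | or φ ψ => (eval v φ) || (eval v ψ)

/-- Conjunction, defined from negation and disjunction. -/
def and (φ ψ : PropForm α) : PropForm α := neg (or (neg φ) (neg ψ))

/-- Material implication. -/
def imp (φ ψ : PropForm α) : PropForm α := or (neg φ) ψ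

/-- Biconditional. -/
def biimp (φ ψ : PropForm α) : PropForm α := and (imp φ ψ) (imp ψ φ)

/-- A formula is a tautology if it is true under every boolean valuation. -/
def Tautology (φ : PropForm α) : Prop := ∀ v : α → Bool, eval v φ = true

/-- A formula is a contradiction if it is false under every boolean valuation. -/
def Contradiction (φ : PropForm α) : Prop := ∀ v : α → Bool, eval v φ = false

end PropForm

open PropForm

/-- The PL-deductive closure of `F`: ψ ∈ [F]^PL iff there are φ₁,…,φₙ ∈ F (n ≥ 0) such that
(φ₁ ∧ … ∧ φₙ) → ψ is a tautology (stated via the equivalent curried implication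
φ₁ → (φ₂ → ⋯ → ψ)). -/
def Cn (F : Set (PropForm α)) : Set (PropForm α) :=
  {ψ | ∃ l : List (PropForm α), (∀ φ ∈ l, φ ∈ F) ∧ Tautology (l.foldr PropForm.imp ψ)}

/-- A set of formulas is consistent if its deductive closure is not the set of all formulas. -/
def ConsistentSet (F : Set (PropForm α)) : Prop := Cn F ≠ Set.univ

/-- A set of formulas is deductively closed if it equals its own deductive closure. -/
def DedClosed (F : Set (PropForm α)) : Prop := F = Cn F

/-- A credibility partition of the set of formulas into credible (ΦC), allowable (ΦA) and
rejected (ΦR) formulas. -/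
structure CredPartition (ΦC ΦA ΦR : Set (PropForm α)) : Prop where
  disjCA : Disjoint ΦC ΦA
  disjCR : Disjoint ΦC ΦR
  disjAR : Disjoint ΦA ΦR
  cover : ΦC ∪ ΦA ∪ ΦR = Set.univ
  taut_mem_C : ∀ φ : PropForm α, Tautology φ → φ ∈ ΦC
  C_consistent : ∀ φ ∈ ΦC, ¬ Contradiction φ
  C_equiv_closed : ∀ φ ψ : PropForm α, Tautology (φ.biimp ψ) → φ ∈ ΦC → ψ ∈ ΦC
  A_consistent : ∀ φ ∈ ΦA, ¬ Contradiction φ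
  A_equiv_closed : ∀ φ ψ : PropForm α, Tautology (φ.biimp ψ) → φ ∈ ΦA → ψ ∈ ΦA
  contra_mem_R : ∀ φ : PropForm α, Contradiction φ → φ ∈ ΦR

/-- Basic AGM belief revision function based on K: postulates AGM1–AGM6. -/
structure IsBasicAGM (K : Set (PropForm α)) (B : PropForm α → Set (PropForm α)) : Prop where
  agm1 : ∀ φ : PropForm α, B φ = Cn (B φ)
  agm2 : ∀ φ : PropForm α, φ ∈ B φ
  agm3 : ∀ φ : PropForm α, B φ ⊆ Cn (K ∪ {φ})
  agm4 : ∀ φ : PropForm α, φ.neg ∉ K → Cn (K ∪ {φ}) ⊆ B φ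
  agm5 : ∀ φ : PropForm α, B φ = Set.univ ↔ Contradiction φ
  agm6 : ∀ φ ψ : PropForm α, Tautology (φ.biimp ψ) → B φ = B ψ

/-- Filtered belief revision function based on K, relative to a credibility partition. -/
structure IsFiltered (ΦC ΦA ΦR K : Set (PropForm α))
    (B : PropForm α → Set (PropForm α)) : Prop where
  f1 : ∀ φ ∈ ΦR, B φ = K
  f2a : ∀ φ : PropForm α, φ.neg ∉ K → φ ∈ ΦC → B φ = Cn (K ∪ {φ})
  f2b : ∀ φ : PropForm α, φ.neg ∉ K → φ ∈ ΦA → B φ = K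
  f3 : ∀ φ : PropForm α, φ.neg ∈ K → ConsistentSet (B φ) ∧ DedClosed (B φ)
  f3a : ∀ φ : PropForm α, φ.neg ∈ K → φ ∈ ΦC → φ ∈ B φ
  f3b : ∀ φ : PropForm α, φ.neg ∈ K → φ ∈ ΦA →
    B φ ⊆ K \ {φ.neg} ∧ Cn (B φ ∪ {φ.neg}) = K
  f4 : ∀ φ ψ : PropForm α, Tautology (φ.biimp ψ) → B φ = B ψ

section Helpers
variable {α : Type} {F G S : Set (PropForm α)} {φ ψ χ : PropForm α}

lemma eval_foldr_imp (v : α → Bool) (l : List (PropForm α)) (ψ : PropForm α) :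
    eval v (l.foldr PropForm.imp ψ) = true ↔
      ((∀ χ ∈ l, eval v χ = true) → eval v ψ = true) := by
  induction l with
  | nil => simp
  | cons a l ih =>
    simp only [List.foldr_cons, PropForm.imp, PropForm.eval, Bool.or_eq_true,
      Bool.not_eq_true', List.mem_cons, forall_eq_or_imp]
    rw [ih]
    cases h : eval v a <;> simp [h]

lemma mem_Cn_iff : ψ ∈ Cn F ↔
    ∃ l : List (PropForm α), (∀ χ ∈ l, χ ∈ F) ∧
      ∀ v : α → Bool, (∀ χ ∈ l, eval v χ = true) → eval v ψ = true := by
  unfold Cn Tautology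
  simp only [Set.mem_setOf_eq]
  constructor
  · rintro ⟨l, h1, h2⟩; exact ⟨l, h1, fun v => (eval_foldr_imp v l ψ).mp (h2 v)⟩
  · rintro ⟨l, h1, h2⟩; exact ⟨l, h1, fun v => (eval_foldr_imp v l ψ).mpr (h2 v)⟩

lemma subset_Cn : F ⊆ Cn F := fun φ hφ =>
  mem_Cn_iff.mpr ⟨[φ], by simpa using hφ, fun v h => h φ (by simp)⟩

lemma Cn_mono (h : F ⊆ G) : Cn F ⊆ Cn G := by
  intro ψ hψ
  obtain ⟨l, h1, h2⟩ := mem_Cn_iff.mp hψ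
  exact mem_Cn_iff.mpr ⟨l, fun χ hχ => h (h1 χ hχ), h2⟩

lemma list_sem_trans (l : List (PropForm α)) (hl : ∀ χ ∈ l, χ ∈ Cn F) :
    ∃ L : List (PropForm α), (∀ χ ∈ L, χ ∈ F) ∧
      ∀ v : α → Bool, (∀ χ ∈ L, eval v χ = true) → ∀ χ ∈ l, eval v χ = true := by
  induction l with
  | nil => exact ⟨[], by simp, by simp⟩
  | cons a l ih =>
    obtain ⟨L, hL1, hL2⟩ := ih (fun χ hχ => hl χ (by simp [hχ]))
    obtain ⟨La, ha1, ha2⟩ := mem_Cn_iff.mp (hl a (by simp))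
    refine ⟨La ++ L, ?_, ?_⟩
    · intro χ hχ; rcases List.mem_append.mp hχ with h | h
      exacts [ha1 χ h, hL1 χ h]
    · intro v hv χ hχ
      rcases List.mem_cons.mp hχ with rfl | h
      · exact ha2 v fun χ hχ => hv χ (List.mem_append.mpr (Or.inl hχ))
      · exact hL2 v (fun χ hχ => hv χ (List.mem_append.mpr (Or.inr hχ))) χ h

lemma Cn_trans (h : S ⊆ Cn F) : Cn S ⊆ Cn F := by
  intro ψ hψ
  obtain ⟨l, h1, h2⟩ := mem_Cn_iff.mp hψ
  obtain ⟨L, hL1, hL2⟩ := list_sem_trans l (fun χ hχ => h (h1 χ hχ))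
  exact mem_Cn_iff.mpr ⟨L, hL1, fun v hv => h2 v (hL2 v hv)⟩

lemma Cn_Cn : Cn (Cn F) = Cn F :=
  le_antisymm (Cn_trans le_rfl) (Cn_mono subset_Cn)

lemma taut_mem_Cn (h : Tautology ψ) : ψ ∈ Cn F :=
  mem_Cn_iff.mpr ⟨[], by simp, fun v _ => h v⟩

lemma Cn_imp_closed (h : ψ ∈ Cn F) (ht : ∀ v, eval v ψ = true → eval v χ = true) :
    χ ∈ Cn F := by
  obtain ⟨l, h1, h2⟩ := mem_Cn_iff.mp h
  exact mem_Cn_iff.mpr ⟨l, h1, fun v hv => ht v (h2 v hv)⟩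

lemma explosion (h1 : φ ∈ F) (h2 : φ.neg ∈ F) : Cn F = Set.univ := by
  ext ψ
  simp only [Set.mem_univ, iff_true]
  refine mem_Cn_iff.mpr ⟨[φ, φ.neg], by simp [h1, h2], fun v hv => ?_⟩
  have := hv φ (by simp)
  have h' := hv φ.neg (by simp)
  simp [PropForm.eval, this] at h'

lemma Cn_univ : Cn (Set.univ : Set (PropForm α)) = Set.univ :=
  le_antisymm (fun _ _ => trivial) subset_Cn

end Helpers

section Helpers2
variable {α : Type} {F G K S : Set (PropForm α)} {φ ψ χ : PropForm α}

open Classical in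
lemma deduction_mp (h : ψ ∈ Cn (F ∪ {φ})) : φ.imp ψ ∈ Cn F := by
  obtain ⟨l, h1, h2⟩ := mem_Cn_iff.mp h
  refine mem_Cn_iff.mpr ⟨l.filter (fun χ => decide (χ ∈ F)), ?_, ?_⟩
  · intro χ hχ
    have := List.of_mem_filter hχ
    simpa using this
  · intro v hv
    simp only [PropForm.imp, PropForm.eval, Bool.or_eq_true, Bool.not_eq_true']
    cases hφ : eval v φ with
    | false => simp
    | true =>
      refine Or.inr (h2 v fun χ hχ => ?_)
      by_cases hF : χ ∈ F
      · exact hv χ (List.mem_filter.mpr ⟨hχ, by simp [hF]⟩)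
      · have : χ = φ := by
          rcases h1 χ hχ with h | h
          · exact absurd h hF
          · simpa using h
        rw [this]; exact hφ

lemma deduction_mpr (h : φ.imp ψ ∈ Cn F) : ψ ∈ Cn (F ∪ {φ}) := by
  obtain ⟨l, h1, h2⟩ := mem_Cn_iff.mp h
  refine mem_Cn_iff.mpr ⟨φ :: l, ?_, ?_⟩
  · intro χ hχ
    rcases List.mem_cons.mp hχ with rfl | h
    · exact Or.inr rfl
    · exact Or.inl (h1 χ h)
  · intro v hv
    have h3 := h2 v fun χ hχ => hv χ (by simp [hχ])
    have h4 := hv φ (by simp)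
    simp only [PropForm.imp, PropForm.eval, Bool.or_eq_true, Bool.not_eq_true', h4] at h3
    simpa using h3

lemma eval_biimp_iff : Tautology (φ.biimp ψ) ↔ ∀ v : α → Bool, eval v φ = eval v ψ := by
  unfold Tautology
  constructor <;> intro h v <;> have := h v <;>
    revert this <;>
    simp only [PropForm.biimp, PropForm.and, PropForm.imp, PropForm.eval] <;>
    cases h1 : eval v φ <;> cases h2 : eval v ψ <;> simp

lemma biimp_symm (h : Tautology (φ.biimp ψ)) : Tautology (ψ.biimp φ) :=
  eval_biimp_iff.mpr fun v => (eval_biimp_iff.mp h v).symm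

lemma mem_Cn_congr (h : ∀ v : α → Bool, eval v ψ = eval v χ) :
    ψ ∈ Cn F ↔ χ ∈ Cn F :=
  ⟨fun hm => Cn_imp_closed hm (fun v hv => (h v) ▸ hv),
   fun hm => Cn_imp_closed hm (fun v hv => (h v).symm ▸ hv)⟩

lemma Cn_union_congr (h : ∀ v : α → Bool, eval v φ = eval v ψ) :
    Cn (F ∪ {φ}) = Cn (F ∪ {ψ}) := by
  ext χ
  constructor <;> intro hχ
  · refine deduction_mpr ?_
    have := deduction_mp hχ
    refine (mem_Cn_congr (ψ := φ.imp χ) ?_).mp this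
    intro v; simp [PropForm.imp, PropForm.eval, h v]
  · refine deduction_mpr ?_
    have := deduction_mp hχ
    refine (mem_Cn_congr (ψ := ψ.imp χ) ?_).mp this
    intro v; simp [PropForm.imp, PropForm.eval, h v]

lemma eval_neg (v : α → Bool) : eval v φ.neg = !eval v φ := rfl

lemma not_contra_exists (h : ¬ Contradiction φ) : ∃ v : α → Bool, eval v φ = true := by
  unfold Contradiction at h
  push_neg at h
  obtain ⟨v, hv⟩ := h
  exact ⟨v, by simpa using hv⟩

-- consistency of Cn {φ} for satisfiable φ
lemma Cn_singleton_consistent (h : ¬ Contradiction φ) : Cn ({φ} : Set (PropForm α)) ≠ Set.univ := by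
  obtain ⟨v, hv⟩ := not_contra_exists h
  intro heq
  have : φ.neg ∈ Cn ({φ} : Set (PropForm α)) := heq ▸ trivial
  obtain ⟨l, h1, h2⟩ := mem_Cn_iff.mp this
  have := h2 v fun χ hχ => by rw [Set.mem_singleton_iff.mp (h1 χ hχ)]; exact hv
  simp [eval_neg, hv] at this

-- if Cn(F ∪ {φ}) = univ then φ.neg ∈ Cn F
lemma neg_mem_of_inconsistent (h : Cn (F ∪ {φ}) = Set.univ) : φ.neg ∈ Cn F := by
  have : φ.neg ∈ Cn (F ∪ {φ}) := h ▸ trivial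
  have h2 := deduction_mp this
  exact Cn_imp_closed h2 fun v hv => by
    revert hv
    simp only [PropForm.imp, PropForm.eval, Bool.or_eq_true, Bool.not_eq_true']
    cases hφ : eval v φ <;> simp

lemma contra_Cn_union (h : Contradiction φ) : Cn (F ∪ {φ}) = Set.univ := by
  ext ψ
  simp only [Set.mem_univ, iff_true]
  refine mem_Cn_iff.mpr ⟨[φ], by simp, fun v hv => ?_⟩
  have := hv φ (by simp)
  rw [h v] at this
  exact absurd this (by simp)

end Helpers2

section Main
variable {α : Type} {ΦC ΦA ΦR K : Set (PropForm α)} {φ ψ : PropForm α}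

lemma Cn_singleton_congr (h : ∀ v : α → Bool, eval v φ = eval v ψ) :
    Cn ({φ} : Set (PropForm α)) = Cn ({ψ} : Set (PropForm α)) := by
  have := Cn_union_congr (F := (∅ : Set (PropForm α))) h
  simpa using this

lemma contra_congr (h : ∀ v : α → Bool, eval v φ = eval v ψ) :
    Contradiction φ ↔ Contradiction ψ := by
  unfold Contradiction; exact ⟨fun hc v => (h v).symm.trans (hc v), fun hc v => (h v).trans (hc v)⟩

lemma cells_congr (hpart : CredPartition ΦC ΦA ΦR) (ht : Tautology (φ.biimp ψ)) :
    (φ ∈ ΦC ↔ ψ ∈ ΦC) ∧ (φ ∈ ΦA ↔ ψ ∈ ΦA) ∧ (φ ∈ ΦR ↔ ψ ∈ ΦR) := by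
  have hts := biimp_symm ht
  have hC : φ ∈ ΦC ↔ ψ ∈ ΦC :=
    ⟨hpart.C_equiv_closed φ ψ ht, hpart.C_equiv_closed ψ φ hts⟩
  have hA : φ ∈ ΦA ↔ ψ ∈ ΦA :=
    ⟨hpart.A_equiv_closed φ ψ ht, hpart.A_equiv_closed ψ φ hts⟩
  refine ⟨hC, hA, ?_⟩
  have hR : ∀ χ : PropForm α, χ ∈ ΦR ↔ (χ ∉ ΦC ∧ χ ∉ ΦA) := by
    intro χ
    constructor
    · intro hr
      exact ⟨fun hc => Set.disjoint_left.mp hpart.disjCR hc hr,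
             fun ha => Set.disjoint_left.mp hpart.disjAR ha hr⟩
    · rintro ⟨hc, ha⟩
      have : χ ∈ ΦC ∪ ΦA ∪ ΦR := hpart.cover ▸ trivial
      rcases this with (h | h) | h
      · exact absurd h hc
      · exact absurd h ha
      · exact h
  rw [hR, hR, hC, hA]

open Classical in
noncomputable def mkBs (ΦC ΦA K : Set (PropForm α))
    (Bo : PropForm α → Set (PropForm α)) (φ : PropForm α) : Set (PropForm α) :=
  if Contradiction φ then Set.univ
  else if φ.neg ∈ K then
    (if φ ∈ ΦC then Bo φ else if φ ∈ ΦA then Cn (Bo φ ∪ {φ}) else Cn {φ})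
  else Cn (K ∪ {φ})

section mkBsLemmas
variable {Bo : PropForm α → Set (PropForm α)}

lemma mkBs_contra (h : Contradiction φ) : mkBs ΦC ΦA K Bo φ = Set.univ := by
  simp [mkBs, h]

lemma mkBs_open (hc : ¬ Contradiction φ) (hn : φ.neg ∉ K) :
    mkBs ΦC ΦA K Bo φ = Cn (K ∪ {φ}) := by simp [mkBs, hc, hn]

lemma mkBs_C (hc : ¬ Contradiction φ) (hn : φ.neg ∈ K) (hC : φ ∈ ΦC) :
    mkBs ΦC ΦA K Bo φ = Bo φ := by simp [mkBs, hc, hn, hC]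

lemma mkBs_A (hc : ¬ Contradiction φ) (hn : φ.neg ∈ K) (hC : φ ∉ ΦC) (hA : φ ∈ ΦA) :
    mkBs ΦC ΦA K Bo φ = Cn (Bo φ ∪ {φ}) := by simp [mkBs, hc, hn, hC, hA]

lemma mkBs_other (hc : ¬ Contradiction φ) (hn : φ.neg ∈ K) (hC : φ ∉ ΦC) (hA : φ ∉ ΦA) :
    mkBs ΦC ΦA K Bo φ = Cn ({φ} : Set (PropForm α)) := by simp [mkBs, hc, hn, hC, hA]

end mkBsLemmas
end Main

/-- Proposition 1: B° is a filtered belief revision function iff it is obtained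
from some basic AGM belief revision function by filtering through the credibility partition. -/
theorem filtered_iff_basicAGM_representation {α : Type} [Countable α] [Nonempty α]
    (ΦC ΦA ΦR K : Set (PropForm α)) (hpart : CredPartition ΦC ΦA ΦR)
    (hKcons : ConsistentSet K) (hKded : DedClosed K)
    (Bo : PropForm α → Set (PropForm α)) :
    IsFiltered ΦC ΦA ΦR K Bo ↔
      ∃ Bs : PropForm α → Set (PropForm α), IsBasicAGM K Bs ∧
        ∀ φ : PropForm α,
          (φ ∈ ΦR → Bo φ = K) ∧
          (φ ∈ ΦC → Bo φ = Bs φ) ∧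
          (φ ∈ ΦA → Bo φ = K ∩ Bs φ) := by
  constructor
  · -- forward direction
    intro h
    refine ⟨mkBs ΦC ΦA K Bo, ⟨?_, ?_, ?_, ?_, ?_, ?_⟩, ?_⟩
    · -- agm1
      intro φ
      by_cases hc : Contradiction φ
      · rw [mkBs_contra hc, Cn_univ]
      · by_cases hn : φ.neg ∈ K
        · by_cases hC : φ ∈ ΦC
          · rw [mkBs_C hc hn hC]; exact (h.f3 φ hn).2
          · by_cases hA : φ ∈ ΦA
            · rw [mkBs_A hc hn hC hA, Cn_Cn]
            · rw [mkBs_other hc hn hC hA, Cn_Cn]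
        · rw [mkBs_open hc hn, Cn_Cn]
    · -- agm2
      intro φ
      by_cases hc : Contradiction φ
      · rw [mkBs_contra hc]; trivial
      · by_cases hn : φ.neg ∈ K
        · by_cases hC : φ ∈ ΦC
          · rw [mkBs_C hc hn hC]; exact h.f3a φ hn hC
          · by_cases hA : φ ∈ ΦA
            · rw [mkBs_A hc hn hC hA]; exact subset_Cn (Set.mem_union_right _ rfl)
            · rw [mkBs_other hc hn hC hA]; exact subset_Cn rfl
        · rw [mkBs_open hc hn]; exact subset_Cn (Set.mem_union_right _ rfl)
    · -- agm3
      intro φ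
      by_cases hc : Contradiction φ
      · rw [mkBs_contra hc, contra_Cn_union hc]
      · by_cases hn : φ.neg ∈ K
        · have huniv : Cn (K ∪ {φ}) = Set.univ :=
            explosion (Set.mem_union_right _ rfl) (Set.mem_union_left _ hn)
          rw [huniv]; exact fun _ _ => trivial
        · rw [mkBs_open hc hn]
    · -- agm4
      intro φ hn
      have hc : ¬ Contradiction φ := fun hcon => hn (by
        rw [hKded]
        exact taut_mem_Cn (fun v => by simp [eval_neg, hcon v]))
      rw [mkBs_open hc hn]
    · -- agm5
      intro φ
      constructor
      · intro huniv
        by_contra hc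
        by_cases hn : φ.neg ∈ K
        · by_cases hC : φ ∈ ΦC
          · rw [mkBs_C hc hn hC] at huniv
            have hcons : Cn (Bo φ) ≠ Set.univ := (h.f3 φ hn).1
            exact hcons (by rw [huniv, Cn_univ])
          · by_cases hA : φ ∈ ΦA
            · rw [mkBs_A hc hn hC hA] at huniv
              have h1 : φ.neg ∈ Cn (Bo φ) := neg_mem_of_inconsistent huniv
              have h2 : Bo φ = Cn (Bo φ) := (h.f3 φ hn).2
              have h3 := (h.f3b φ hn hA).1
              have h4 : φ.neg ∈ Bo φ := by rw [h2]; exact h1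
              exact (h3 h4).2 rfl
            · rw [mkBs_other hc hn hC hA] at huniv
              exact Cn_singleton_consistent hc huniv
        · rw [mkBs_open hc hn] at huniv
          have h1 := neg_mem_of_inconsistent huniv
          rw [← hKded] at h1
          exact hn h1
      · exact mkBs_contra
    · -- agm6
      intro φ ψ ht
      have he : ∀ v, eval v φ = eval v ψ := eval_biimp_iff.mp ht
      have hnegK : φ.neg ∈ K ↔ ψ.neg ∈ K := by
        rw [hKded]
        exact mem_Cn_congr (fun v => by simp [eval_neg, he v])
      have hcc := contra_congr he
      have hcells := cells_congr hpart ht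
      by_cases hc : Contradiction φ
      · rw [mkBs_contra hc, mkBs_contra (hcc.mp hc)]
      · have hcψ : ¬ Contradiction ψ := fun hx => hc (hcc.mpr hx)
        by_cases hn : φ.neg ∈ K
        · have hnψ := hnegK.mp hn
          by_cases hC : φ ∈ ΦC
          · rw [mkBs_C hc hn hC, mkBs_C hcψ hnψ (hcells.1.mp hC)]
            exact h.f4 φ ψ ht
          · have hCψ : ψ ∉ ΦC := fun hx => hC (hcells.1.mpr hx)
            by_cases hA : φ ∈ ΦA
            · rw [mkBs_A hc hn hC hA, mkBs_A hcψ hnψ hCψ (hcells.2.1.mp hA),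
                h.f4 φ ψ ht]
              exact Cn_union_congr he
            · have hAψ : ψ ∉ ΦA := fun hx => hA (hcells.2.1.mpr hx)
              rw [mkBs_other hc hn hC hA, mkBs_other hcψ hnψ hCψ hAψ]
              exact Cn_singleton_congr he
        · have hnψ : ψ.neg ∉ K := fun hx => hn (hnegK.mpr hx)
          rw [mkBs_open hc hn, mkBs_open hcψ hnψ]
          exact Cn_union_congr he
    · -- representation
      intro φ
      refine ⟨h.f1 φ, ?_, ?_⟩
      · intro hC
        have hc := hpart.C_consistent φ hC
        by_cases hn : φ.neg ∈ K
        · rw [mkBs_C hc hn hC]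
        · rw [mkBs_open hc hn]; exact h.f2a φ hn hC
      · intro hA
        have hc := hpart.A_consistent φ hA
        have hC : φ ∉ ΦC := fun hx => Set.disjoint_left.mp hpart.disjCA hx hA
        by_cases hn : φ.neg ∈ K
        · rw [mkBs_A hc hn hC hA]
          have hded : Bo φ = Cn (Bo φ) := (h.f3 φ hn).2
          obtain ⟨hsub, hrec⟩ := h.f3b φ hn hA
          apply Set.Subset.antisymm
          · intro x hx
            exact ⟨(hsub hx).1, subset_Cn (Set.mem_union_left _ hx)⟩
          · rintro x ⟨hxK, hxC⟩
            have h1 : φ.imp x ∈ Cn (Bo φ) := deduction_mp hxC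
            have h2 : φ.neg.imp x ∈ Cn (Bo φ) := by
              apply deduction_mp
              rw [hrec]; exact hxK
            have h3 : x ∈ Cn ({φ.imp x, φ.neg.imp x} : Set (PropForm α)) := by
              refine mem_Cn_iff.mpr ⟨[φ.imp x, φ.neg.imp x], by simp, fun v hv => ?_⟩
              have e1 := hv (φ.imp x) (by simp)
              have e2 := hv (φ.neg.imp x) (by simp)
              cases hφv : eval v φ
              · simpa [PropForm.imp, PropForm.eval, hφv] using e2
              · simpa [PropForm.imp, PropForm.eval, hφv] using e1
            rw [hded]
            refine Cn_trans ?_ h3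
            intro χ hχ
            rcases hχ with rfl | hχ
            · exact h1
            · rw [Set.mem_singleton_iff.mp hχ]; exact h2
        · rw [mkBs_open hc hn, h.f2b φ hn hA]
          exact (Set.inter_eq_left.mpr
            (fun x hx => subset_Cn (Set.mem_union_left _ hx))).symm
  · -- backward direction
    rintro ⟨Bs, hB, hrep⟩
    refine ⟨fun φ hR => (hrep φ).1 hR, ?_, ?_, ?_, ?_, ?_, ?_⟩
    · -- f2a
      intro φ hn hC
      rw [(hrep φ).2.1 hC]
      exact Set.Subset.antisymm (hB.agm3 φ) (hB.agm4 φ hn)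
    · -- f2b
      intro φ hn hA
      rw [(hrep φ).2.2 hA]
      exact Set.inter_eq_left.mpr
        (fun x hx => hB.agm4 φ hn (subset_Cn (Set.mem_union_left _ hx)))
    · -- f3
      intro φ hn
      have hcell : φ ∈ ΦC ∪ ΦA ∪ ΦR := by rw [hpart.cover]; trivial
      rcases hcell with (hC | hA) | hR
      · rw [(hrep φ).2.1 hC]
        refine ⟨?_, hB.agm1 φ⟩
        intro huniv
        rw [← hB.agm1 φ] at huniv
        exact hpart.C_consistent φ hC ((hB.agm5 φ).mp huniv)
      · rw [(hrep φ).2.2 hA]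
        have hsubK : Cn (K ∩ Bs φ) ⊆ K := by
          intro x hx
          rw [hKded]
          exact Cn_mono Set.inter_subset_left hx
        have hsubB : Cn (K ∩ Bs φ) ⊆ Bs φ := by
          have h2 : Cn (K ∩ Bs φ) ⊆ Cn (Bs φ) := Cn_mono Set.inter_subset_right
          rw [← hB.agm1 φ] at h2
          exact h2
        refine ⟨?_, ?_⟩
        · intro huniv
          have hKuniv : K = Set.univ := Set.eq_univ_of_univ_subset (huniv ▸ hsubK)
          exact hKcons (by rw [hKuniv, Cn_univ])
        · exact Set.Subset.antisymm subset_Cn (fun x hx => ⟨hsubK hx, hsubB hx⟩)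
      · rw [(hrep φ).1 hR]
        exact ⟨hKcons, hKded⟩
    · -- f3a
      intro φ hn hC
      rw [(hrep φ).2.1 hC]
      exact hB.agm2 φ
    · -- f3b
      intro φ hn hA
      rw [(hrep φ).2.2 hA]
      have hcφ := hpart.A_consistent φ hA
      have hnegnot : φ.neg ∉ Bs φ := by
        intro hneg
        have huniv : Cn (Bs φ) = Set.univ := explosion (hB.agm2 φ) hneg
        rw [← hB.agm1 φ] at huniv
        exact hcφ ((hB.agm5 φ).mp huniv)
      constructor
      · rintro x ⟨hxK, hxB⟩
        exact ⟨hxK, fun hx => hnegnot (Set.mem_singleton_iff.mp hx ▸ hxB)⟩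
      · apply Set.Subset.antisymm
        · have hsub : (K ∩ Bs φ) ∪ {φ.neg} ⊆ K := by
            rintro x (hx | hx)
            · exact hx.1
            · rw [Set.mem_singleton_iff.mp hx]; exact hn
          intro x hx
          rw [hKded]
          exact Cn_mono hsub hx
        · intro x hxK
          have hor : φ.or x ∈ K := by
            rw [hKded]
            exact Cn_imp_closed (subset_Cn hxK)
              (fun v hv => by simp [PropForm.eval, hv])
          have horB : φ.or x ∈ Bs φ := by
            rw [hB.agm1 φ]
            exact Cn_imp_closed (subset_Cn (hB.agm2 φ))
              (fun v hv => by simp [PropForm.eval, hv])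
          refine mem_Cn_iff.mpr ⟨[φ.or x, φ.neg], ?_, ?_⟩
          · intro χ hχ
            rcases List.mem_cons.mp hχ with rfl | hχ
            · exact Set.mem_union_left _ ⟨hor, horB⟩
            · simp only [List.mem_cons, List.not_mem_nil, or_false] at hχ
              rw [hχ]
              exact Set.mem_union_right _ rfl
          · intro v hv
            have e1 := hv (φ.or x) (by simp)
            have e2 := hv φ.neg (by simp)
            simp only [PropForm.eval, Bool.or_eq_true, Bool.not_eq_true'] at e1 e2
            rcases e1 with e1 | e1
            · rw [e2] at e1
              exact absurd e1 (by simp)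
            · exact e1
    · -- f4
      intro φ ψ ht
      have hcells := cells_congr hpart ht
      have hcell : φ ∈ ΦC ∪ ΦA ∪ ΦR := by rw [hpart.cover]; trivial
      rcases hcell with (hC | hA) | hR
      · rw [(hrep φ).2.1 hC, (hrep ψ).2.1 (hcells.1.mp hC), hB.agm6 φ ψ ht]
      · rw [(hrep φ).2.2 hA, (hrep ψ).2.2 (hcells.2.1.mp hA), hB.agm6 φ ψ ht]
      · rw [(hrep φ).1 hR, (hrep ψ).1 (hcells.2.2.mp hR)]
end

section
/- Let K be a consistent and deductively closed set of propositional formulas, {Φ_C, Φ_A, Φ_R} a credibility partition of Φ, and B°_K : Φ → 2^Φ a filtered belief revision function based on K. If φ ∈ Φ_A and ¬φ ∈ K, then φ ∉ B°_K(φ) and ¬φ ∉ B°_K(φ); that is, upon receiving an allowable item of information contradicting her initial beliefs, the agent suspends judgment concerning φ. -/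
open PropForm

lemma subset_Cn_s8 {α : Type} (F : Set (PropForm α)) : F ⊆ Cn F := by
  intro ψ hψ
  exact ⟨[ψ], by simpa using hψ, by intro v; simp [PropForm.imp, PropForm.eval]⟩

lemma Cn_explode {α : Type} (F : Set (PropForm α)) (φ : PropForm α)
    (h1 : φ ∈ F) (h2 : φ.neg ∈ F) : Cn F = Set.univ := by
  ext ψ
  simp only [Set.mem_univ, iff_true]
  refine ⟨[φ, φ.neg], ?_, ?_⟩
  · intro χ hχ; simp only [List.mem_cons, List.not_mem_nil, or_false] at hχ
    rcases hχ with rfl | rfl <;> assumption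
  · intro v
    simp [PropForm.imp, PropForm.eval]
    cases PropForm.eval v φ <;> simp

/-- if φ is allowable and ¬φ ∈ K, then a filtered belief revision function
suspends judgment concerning φ: neither φ nor ¬φ belongs to B°(φ). -/
theorem filtered_suspends_judgment {α : Type} [Countable α] [Nonempty α]
    (ΦC ΦA ΦR K : Set (PropForm α)) (hpart : CredPartition ΦC ΦA ΦR)
    (hKcons : ConsistentSet K) (hKded : DedClosed K)
    (Bo : PropForm α → Set (PropForm α)) (hfilt : IsFiltered ΦC ΦA ΦR K Bo)
    (φ : PropForm α) (hA : φ ∈ ΦA) (hneg : φ.neg ∈ K) :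
    φ ∉ Bo φ ∧ φ.neg ∉ Bo φ := by
  obtain ⟨hsub, hcn⟩ := hfilt.f3b φ hneg hA
  constructor
  · intro hφ
    have : Cn (Bo φ ∪ {φ.neg}) = Set.univ :=
      Cn_explode _ φ (Or.inl hφ) (Or.inr rfl)
    have hKuniv : K = Set.univ := hcn ▸ this
    apply hKcons
    rw [hKuniv]
    exact Set.eq_univ_of_univ_subset (hKuniv ▸ subset_Cn_s8 K)
  · intro hφ
    exact (hsub hφ).2 rfl
end

section
/- Let ⟨Ω, {E_C, E_A, E_R}, f⟩ be a generalized choice structure, V : A → 2^Ω a valuation, K = {φ ∈ Φ : f(Ω) ⊆ ||φ||}, Ψ = {φ ∈ Φ : ||φ|| ∈ E}, and B_{K,Ψ}(φ) = {ψ ∈ Φ : f(||φ||) ⊆ ||ψ||} for φ ∈ Ψ. Then for every φ ∈ Ψ: (i) if f(||φ||) = ||φ|| ∩ f(Ω) and this set is nonempty, then B_{K,Ψ}(φ) = [K ∪ {φ}]^PL; and (ii) if f(||φ||) = f(Ω), then B_{K,Ψ}(φ) = K. -/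
open PropForm

/-! Generalized choice structures and their models. -/

/-- A generalized choice structure ⟨Ω, {EC, EA, ER}, f⟩. The function `f` is total on `Set Ω`
but is only constrained on the events in `EC ∪ EA ∪ ER`. -/
structure GCS (Ω : Type) : Type where
  EC : Set (Set Ω)
  EA : Set (Set Ω)
  ER : Set (Set Ω)
  f : Set Ω → Set Ω
  omega_nonempty : Nonempty Ω
  disjCA : Disjoint EC EA
  disjCR : Disjoint EC ER
  disjAR : Disjoint EA ER
  univ_mem_C : (Set.univ : Set Ω) ∈ EC
  empty_mem_R : (∅ : Set Ω) ∈ ER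
  f_univ_nonempty : (f Set.univ).Nonempty
  f_R : ∀ E ∈ ER, f E = f Set.univ
  f_C : ∀ E ∈ EC, (f E).Nonempty ∧ f E ⊆ E
  f_A : ∀ E ∈ EA, (f E ∩ E).Nonempty

/-- The collection of all events (possible items of information) of a GCS. -/
def GCS.events {Ω : Type} (C : GCS Ω) : Set (Set Ω) := C.EC ∪ C.EA ∪ C.ER

/-- The truth set ||φ|| ⊆ Ω of a formula, given a valuation V : A → 2^Ω. -/
def truthSet {Ω α : Type} (V : α → Set Ω) : PropForm α → Set Ω
  | .atom p => V p
  | .neg φ => (truthSet V φ)ᶜ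
  | .or φ ψ => truthSet V φ ∪ truthSet V ψ

/-- A model (interpretation) of a GCS: a credibility partition together with a valuation
such that events in EC (resp. EA, ER) are truth sets only of credible (resp. allowable,
rejected) formulas. -/
structure IsGCSModel {Ω α : Type} (C : GCS Ω) (ΦC ΦA ΦR : Set (PropForm α))
    (V : α → Set Ω) : Prop where
  credPartition : CredPartition ΦC ΦA ΦR
  memC : ∀ φ : PropForm α, truthSet V φ ∈ C.EC → φ ∈ ΦC
  memA : ∀ φ : PropForm α, truthSet V φ ∈ C.EA → φ ∈ ΦA
  memR : ∀ φ : PropForm α, truthSet V φ ∈ C.ER → φ ∈ ΦR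

/-- The initial belief set K = {φ : f(Ω) ⊆ ||φ||} determined by a GCS and a valuation. -/
def gcsK {Ω α : Type} (C : GCS Ω) (V : α → Set Ω) : Set (PropForm α) :=
  {φ | C.f Set.univ ⊆ truthSet V φ}

/-- The set Ψ = {φ : ||φ|| ∈ E} of formulas that are potential items of information. -/
def gcsPsi {Ω α : Type} (C : GCS Ω) (V : α → Set Ω) : Set (PropForm α) :=
  {φ | truthSet V φ ∈ C.events}

/-- The partial belief revision function B_{K,Ψ}(φ) = {ψ : f(||φ||) ⊆ ||ψ||} (to be used
only on formulas in Ψ). -/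
def gcsB {Ω α : Type} (C : GCS Ω) (V : α → Set Ω) (φ : PropForm α) : Set (PropForm α) :=
  {ψ | C.f (truthSet V φ) ⊆ truthSet V ψ}

/-- Basic-AGM consistency of a GCS (relative to the propositional language over atoms α):
for every model there is a full-domain extension Bo of the partial belief revision function
and a basic AGM belief revision function Bs based on K such that Bo is obtained from Bs by
filtering through the credibility partition. -/
def BasicAGMConsistent (α : Type) {Ω : Type} (C : GCS Ω) : Prop :=
  ∀ (ΦC ΦA ΦR : Set (PropForm α)) (V : α → Set Ω),
    IsGCSModel C ΦC ΦA ΦR V →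
      ∃ Bo Bs : PropForm α → Set (PropForm α),
        (∀ φ ∈ gcsPsi C V, Bo φ = gcsB C V φ) ∧
        IsBasicAGM (gcsK C V) Bs ∧
        ∀ φ : PropForm α,
          (φ ∈ ΦR → Bo φ = gcsK C V) ∧
          (φ ∈ ΦC → Bo φ = Bs φ) ∧
          (φ ∈ ΦA → Bo φ = gcsK C V ∩ Bs φ)

/-- Condition (B) of Proposition 2: the semantic characterization of basic-AGM consistency. -/
def GCSCondB {Ω : Type} (C : GCS Ω) : Prop :=
  ∀ E ∈ C.events,
    ((E ∩ C.f Set.univ).Nonempty →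
      (E ∈ C.EC → C.f E = E ∩ C.f Set.univ) ∧
      (E ∈ C.EA → C.f E = C.f Set.univ)) ∧
    (E ∩ C.f Set.univ = ∅ → E ∈ C.EA →
      ∃ E' : Set Ω, E'.Nonempty ∧ E' ⊆ E ∧ C.f E = C.f Set.univ ∪ E')

/-- for φ ∈ Ψ, (i) if f(||φ||) = ||φ|| ∩ f(Ω) and this set is nonempty then
B_{K,Ψ}(φ) = [K ∪ {φ}]^PL, and (ii) if f(||φ||) = f(Ω) then B_{K,Ψ}(φ) = K. -/
theorem gcsB_expansion_and_identity {Ω α : Type} [Countable α] [Nonempty α]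
    (C : GCS Ω) (V : α → Set Ω) :
    ∀ φ ∈ gcsPsi C V,
      ((C.f (truthSet V φ) = truthSet V φ ∩ C.f Set.univ ∧
          (truthSet V φ ∩ C.f Set.univ).Nonempty) →
        gcsB C V φ = Cn (gcsK C V ∪ {φ})) ∧
      (C.f (truthSet V φ) = C.f Set.univ → gcsB C V φ = gcsK C V) := by
  classical
  have truth_lemma : ∀ (ω : Ω) (χ : PropForm α),
      eval (fun a => decide (ω ∈ V a)) χ = true ↔ ω ∈ truthSet V χ := by
    intro ω χ
    induction χ with
    | atom a => simp [eval, truthSet]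
    | neg χ ih => simp only [eval, truthSet, Bool.not_eq_true', Set.mem_compl_iff, ← ih]; simp
    | or χ₁ χ₂ ih1 ih2 => simp [eval, truthSet, ih1, ih2]
  have foldr_lemma : ∀ (l : List (PropForm α)) (ψ : PropForm α) (v : α → Bool),
      eval v (l.foldr PropForm.imp ψ) = true → (∀ χ ∈ l, eval v χ = true) →
      eval v ψ = true := by
    intro l ψ v
    induction l with
    | nil => intro h _; exact h
    | cons a l ih =>
      intro h hall
      simp only [List.foldr, imp, eval] at h
      have ha := hall a List.mem_cons_self
      rw [ha] at h
      simp at h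
      exact ih h (fun χ hχ => hall χ (List.mem_cons_of_mem a hχ))
  intro φ _
  constructor
  · rintro ⟨hf, -⟩
    ext ψ
    constructor
    · intro hψ
      refine ⟨[φ.imp ψ, φ], ?_, ?_⟩
      · intro χ hχ
        simp at hχ
        rcases hχ with h | h
        · left
          subst h
          intro ω hω
          simp only [truthSet, imp, Set.mem_union, Set.mem_compl_iff]
          by_cases hmem : ω ∈ truthSet V φ
          · right
            have : ω ∈ C.f (truthSet V φ) := by
              rw [hf]; exact ⟨hmem, hω⟩
            exact hψ this
          · left; exact hmem
        · right; simp [h]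
      · intro v
        cases h1 : eval v φ <;> cases h2 : eval v ψ <;>
          simp [List.foldr, imp, eval, h1, h2]
    · rintro ⟨l, hl, htaut⟩
      intro ω hω
      rw [hf] at hω
      obtain ⟨hωφ, hωf⟩ := hω
      have := foldr_lemma l ψ (fun a => decide (ω ∈ V a)) (htaut _) ?_
      · exact (truth_lemma ω ψ).mp this
      · intro χ hχ
        rcases hl χ hχ with h | h
        · exact (truth_lemma ω χ).mpr (h hωf)
        · simp at h; subst h
          exact (truth_lemma ω χ).mpr hωφ
  · intro hf
    ext ψ
    simp only [gcsB, gcsK, Set.mem_setOf_eq, hf]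
end
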